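/- arXiv:1808.00517 — 3 statements merged into one kernel-verified Lean document; each statement's English description precedes it below -/
import Mathlib

section
/- Let P(λ) = Σ_{i=0}^k λ^i A_i be an m×n matrix polynomial of grade k over F (F = ℝ or ℂ) and let L(λ) = λX + Y be a km×kn pencil, where X and Y are viewed as k×k block matrices with m×n blocks. Then for any v ∈ F^k, L(λ)(Λ_k(λ) ⊗ I_n) = v ⊗ P(λ) holds if and only if the column shifted sum X ⊞→ Y equals v ⊗ [A_k A_{k-1} … A_0]; and for any w ∈ F^k, (Λ_k(λ)^T ⊗ I_m)L(λ) = w^T ⊗ P(λ) holds if and only if the row shifted sum X ⊞↓ Y equals w^T ⊗ [A_k^T A_{k-1}^T … A_0^T]^T. -/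
noncomputable section

open Polynomial Matrix

namespace GLin

variable {F : Type*} [RCLike F]

/-! ### Matrix polynomials and pencils -/

/-- The matrix polynomial `P(λ) = ∑_{i=0}^k λ^i A_i` determined by its
coefficient matrices `A_0, …, A_k` (grade `k`). -/
def matPoly {k m n : ℕ} (A : Fin (k + 1) → Matrix (Fin m) (Fin n) F) :
    Matrix (Fin m) (Fin n) F[X] :=
  Matrix.of fun r c => ∑ i : Fin (k + 1), Polynomial.C (A i r c) * Polynomial.X ^ (i : ℕ)

/-- The matrix pencil `L(λ) = λ X + Y`. -/
def pencil {ρ γ : Type*} (Xc Yc : Matrix ρ γ F) : Matrix ρ γ F[X] :=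
  Matrix.of fun i j => Polynomial.C (Xc i j) * Polynomial.X + Polynomial.C (Yc i j)

/-- `Λ_k(λ) ⊗ I_n` where `Λ_k(λ) = (λ^{k-1}, …, λ, 1)ᵀ`. -/
def Lam (F : Type*) [RCLike F] (k n : ℕ) : Matrix (Fin k × Fin n) (Fin n) F[X] :=
  Matrix.of fun p c => if p.2 = c then Polynomial.X ^ (k - 1 - (p.1 : ℕ)) else 0

/-- `Λ_k(λ)ᵀ ⊗ I_m`. -/
def LamRow (F : Type*) [RCLike F] (k m : ℕ) : Matrix (Fin m) (Fin k × Fin m) F[X] :=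
  Matrix.of fun r p => if r = p.2 then Polynomial.X ^ (k - 1 - (p.1 : ℕ)) else 0

/-- `v ⊗ P(λ)`. -/
def vkron {k m n : ℕ} (v : Fin k → F) (P : Matrix (Fin m) (Fin n) F[X]) :
    Matrix (Fin k × Fin m) (Fin n) F[X] :=
  Matrix.of fun p c => Polynomial.C (v p.1) * P p.2 c

/-- `wᵀ ⊗ P(λ)`. -/
def wkron {k m n : ℕ} (w : Fin k → F) (P : Matrix (Fin m) (Fin n) F[X]) :
    Matrix (Fin m) (Fin k × Fin n) F[X] :=
  Matrix.of fun r q => Polynomial.C (w q.1) * P r q.2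

/-- The defining identity of `𝕃₁(P)`: `L(λ)(Λ_k(λ) ⊗ I_n) = v ⊗ P(λ)`. -/
def RightAnsatz {k m n : ℕ} (P : Matrix (Fin m) (Fin n) F[X])
    (L : Matrix (Fin k × Fin m) (Fin k × Fin n) F[X]) (v : Fin k → F) : Prop :=
  L * Lam F k n = vkron v P

/-- The defining identity of `𝕃₂(P)`: `(Λ_k(λ)ᵀ ⊗ I_m) L(λ) = wᵀ ⊗ P(λ)`. -/
def LeftAnsatz {k m n : ℕ} (P : Matrix (Fin m) (Fin n) F[X])
    (L : Matrix (Fin k × Fin m) (Fin k × Fin n) F[X]) (w : Fin k → F) : Prop :=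
  LamRow F k m * L = wkron w P

/-- The vector `α e₁ ∈ F^k`. -/
def e1 {k : ℕ} (α : F) : Fin k → F := fun i => if (i : ℕ) = 0 then α else 0

/-- `M ⊗ I_m`. -/
def kronId {k m : ℕ} (M : Matrix (Fin k) (Fin k) F) :
    Matrix (Fin k × Fin m) (Fin k × Fin m) F :=
  Matrix.of fun p q => if p.2 = q.2 then M p.1 q.1 else 0

/-! ### (strong) g-linearizations -/

/-- `diag(P(λ), I_{k-1} ⊗ I_{m,n})`. -/
def glinTarget {k m n : ℕ} (P : Matrix (Fin m) (Fin n) F[X]) :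
    Matrix (Fin k × Fin m) (Fin k × Fin n) F[X] :=
  Matrix.of fun p q =>
    if p.1 = q.1 then
      (if (p.1 : ℕ) = 0 then P p.2 q.2 else if (p.2 : ℕ) = (q.2 : ℕ) then 1 else 0)
    else 0

/-- A `km × kn` pencil (or matrix polynomial) `L` is a g-linearization of the `m × n`
matrix polynomial `P` of grade `k` if `E(λ) L(λ) G(λ) = diag(P(λ), I_{k-1} ⊗ I_{m,n})`
for unimodular `E`, `G`. -/
def IsGLin {k m n : ℕ} (P : Matrix (Fin m) (Fin n) F[X])
    (L : Matrix (Fin k × Fin m) (Fin k × Fin n) F[X]) : Prop :=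
  ∃ (E : Matrix (Fin k × Fin m) (Fin k × Fin m) F[X])
    (G : Matrix (Fin k × Fin n) (Fin k × Fin n) F[X]),
      IsUnit E.det ∧ IsUnit G.det ∧ E * L * G = glinTarget P

/-- grade-`N` reversal `rev_N P(λ) = λ^N P(1/λ)`, entrywise. -/
def revMat {ρ γ : Type*} (N : ℕ) (P : Matrix ρ γ F[X]) : Matrix ρ γ F[X] :=
  P.map fun p => Polynomial.reflect N p

/-- Strong g-linearization of the grade-`k` matrix polynomial with coefficients `A`. -/
def IsStrongGLin {k m n : ℕ} (A : Fin (k + 1) → Matrix (Fin m) (Fin n) F)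
    (L : Matrix (Fin k × Fin m) (Fin k × Fin n) F[X]) : Prop :=
  IsGLin (matPoly A) L ∧ IsGLin (revMat k (matPoly A)) (revMat 1 L)

/-! ### linearizations (rectangular, of size `(m+s) × (n+s)`) -/

/-- A matrix polynomial `L` (indexed by arbitrary finite types of cardinalities
`m + s` and `n + s`) is a linearization of `P` if, after identifying the index types
with `Fin m ⊕ Fin s` and `Fin n ⊕ Fin s`, one has `E(λ) L(λ) G(λ) = diag(P(λ), I_s)`
for unimodular `E`, `G`. -/
def IsLin {m n : ℕ} (s : ℕ) (P : Matrix (Fin m) (Fin n) F[X])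
    {ρ γ : Type*} [Fintype ρ] [DecidableEq ρ] [Fintype γ] [DecidableEq γ]
    (L : Matrix ρ γ F[X]) : Prop :=
  ∃ (er : ρ ≃ (Fin m ⊕ Fin s)) (ec : γ ≃ (Fin n ⊕ Fin s))
    (E : Matrix (Fin m ⊕ Fin s) (Fin m ⊕ Fin s) F[X])
    (G : Matrix (Fin n ⊕ Fin s) (Fin n ⊕ Fin s) F[X]),
      IsUnit E.det ∧ IsUnit G.det ∧
        E * Matrix.reindex er ec L * G = Matrix.fromBlocks P 0 0 1

/-- Strong linearization of the grade-`k` matrix polynomial with coefficients `A`. -/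
def IsStrongLin {k m n : ℕ} (s : ℕ) (A : Fin (k + 1) → Matrix (Fin m) (Fin n) F)
    {ρ γ : Type*} [Fintype ρ] [DecidableEq ρ] [Fintype γ] [DecidableEq γ]
    (L : Matrix ρ γ F[X]) : Prop :=
  IsLin s (matPoly A) L ∧ IsLin s (revMat k (matPoly A)) (revMat 1 L)

/-! ### shifted sums -/

/-- Column shifted sum `X ⊞→ Y`. -/
def colShiftSum {k m n : ℕ} (Xc Yc : Matrix (Fin k × Fin m) (Fin k × Fin n) F) :
    Matrix (Fin k × Fin m) (Fin (k + 1) × Fin n) F :=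
  Matrix.of fun p q =>
    (if h : (q.1 : ℕ) < k then Xc p (⟨(q.1 : ℕ), h⟩, q.2) else 0) +
    (if h : 0 < (q.1 : ℕ) then
        Yc p (⟨(q.1 : ℕ) - 1, by have := q.1.isLt; omega⟩, q.2)
      else 0)

/-- Row shifted sum `X ⊞↓ Y`. -/
def rowShiftSum {k m n : ℕ} (Xc Yc : Matrix (Fin k × Fin m) (Fin k × Fin n) F) :
    Matrix (Fin (k + 1) × Fin m) (Fin k × Fin n) F :=
  Matrix.of fun p q =>
    (if h : (p.1 : ℕ) < k then Xc (⟨(p.1 : ℕ), h⟩, p.2) q else 0) +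
    (if h : 0 < (p.1 : ℕ) then
        Yc (⟨(p.1 : ℕ) - 1, by have := p.1.isLt; omega⟩, p.2) q
      else 0)

/-! ### the parametrization of `𝕃₁(P)` and `𝕃₂(P)` -/

/-- `X = [v ⊗ A_k ∣ -W]`. -/
def L1X {k m n : ℕ} (A : Fin (k + 1) → Matrix (Fin m) (Fin n) F) (v : Fin k → F)
    (W : Matrix (Fin k × Fin m) (Fin (k - 1) × Fin n) F) :
    Matrix (Fin k × Fin m) (Fin k × Fin n) F :=
  Matrix.of fun p q =>
    if h : (q.1 : ℕ) = 0 then v p.1 * A (Fin.last k) p.2 q.2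
    else -W p (⟨(q.1 : ℕ) - 1, by have := q.1.isLt; omega⟩, q.2)

/-- `Y = [W + v ⊗ [A_{k-1} ⋯ A_1] ∣ v ⊗ A_0]`. -/
def L1Y {k m n : ℕ} (A : Fin (k + 1) → Matrix (Fin m) (Fin n) F) (v : Fin k → F)
    (W : Matrix (Fin k × Fin m) (Fin (k - 1) × Fin n) F) :
    Matrix (Fin k × Fin m) (Fin k × Fin n) F :=
  Matrix.of fun p q =>
    if h : (q.1 : ℕ) < k - 1 then
      W p (⟨(q.1 : ℕ), h⟩, q.2) + v p.1 * A (⟨k - 1 - (q.1 : ℕ), by omega⟩) p.2 q.2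
    else v p.1 * A 0 p.2 q.2

/-- `X = [wᵀ ⊗ A_k ; -Ŵ]`. -/
def L2X {k m n : ℕ} (A : Fin (k + 1) → Matrix (Fin m) (Fin n) F) (w : Fin k → F)
    (W : Matrix (Fin (k - 1) × Fin m) (Fin k × Fin n) F) :
    Matrix (Fin k × Fin m) (Fin k × Fin n) F :=
  Matrix.of fun p q =>
    if h : (p.1 : ℕ) = 0 then w q.1 * A (Fin.last k) p.2 q.2
    else -W (⟨(p.1 : ℕ) - 1, by have := p.1.isLt; omega⟩, p.2) q

/-- `Y = [Ŵ + wᵀ ⊗ [A_{k-1}ᵀ ⋯ A_1ᵀ]ᵀ ; wᵀ ⊗ A_0]`. -/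
def L2Y {k m n : ℕ} (A : Fin (k + 1) → Matrix (Fin m) (Fin n) F) (w : Fin k → F)
    (W : Matrix (Fin (k - 1) × Fin m) (Fin k × Fin n) F) :
    Matrix (Fin k × Fin m) (Fin k × Fin n) F :=
  Matrix.of fun p q =>
    if h : (p.1 : ℕ) < k - 1 then
      W (⟨(p.1 : ℕ), h⟩, p.2) q + w q.1 * A (⟨k - 1 - (p.1 : ℕ), by omega⟩) p.2 q.2
    else w q.1 * A 0 p.2 q.2

/-! ### block structure and `Z`-matrices -/

/-- Assemble a `km × kn` matrix from blocks with row split `m + (k-1)m` and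
column split `n + (k-1)n`. -/
def blk {k m n : ℕ} (TL : Matrix (Fin m) (Fin n) F)
    (TR : Matrix (Fin m) (Fin (k - 1) × Fin n) F)
    (BL : Matrix (Fin (k - 1) × Fin m) (Fin n) F)
    (BR : Matrix (Fin (k - 1) × Fin m) (Fin (k - 1) × Fin n) F) :
    Matrix (Fin k × Fin m) (Fin k × Fin n) F :=
  Matrix.of fun p q =>
    if hp : (p.1 : ℕ) = 0 then
      if hq : (q.1 : ℕ) = 0 then TL p.2 q.2
      else TR p.2 (⟨(q.1 : ℕ) - 1, by have := q.1.isLt; omega⟩, q.2)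
    else
      if hq : (q.1 : ℕ) = 0 then
        BL (⟨(p.1 : ℕ) - 1, by have := p.1.isLt; omega⟩, p.2) q.2
      else
        BR (⟨(p.1 : ℕ) - 1, by have := p.1.isLt; omega⟩, p.2)
          (⟨(q.1 : ℕ) - 1, by have := q.1.isLt; omega⟩, q.2)

/-- Assemble `[[Y₁₁, T],[Z, 0]]`, row split `m + (k-1)m`, column split `(k-1)n + n`. -/
def blkY1 {k m n : ℕ} (Y11 : Matrix (Fin m) (Fin (k - 1) × Fin n) F)
    (T : Matrix (Fin m) (Fin n) F)
    (Z : Matrix (Fin (k - 1) × Fin m) (Fin (k - 1) × Fin n) F) :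
    Matrix (Fin k × Fin m) (Fin k × Fin n) F :=
  Matrix.of fun p q =>
    if hp : (p.1 : ℕ) = 0 then
      if hq : (q.1 : ℕ) < k - 1 then Y11 p.2 (⟨(q.1 : ℕ), hq⟩, q.2) else T p.2 q.2
    else
      if hq : (q.1 : ℕ) < k - 1 then
        Z (⟨(p.1 : ℕ) - 1, by have := p.1.isLt; omega⟩, p.2) (⟨(q.1 : ℕ), hq⟩, q.2)
      else 0

/-- Assemble `[[Y₁₁, Z],[T, 0]]`, row split `(k-1)m + m`, column split `n + (k-1)n`. -/
def blkY2 {k m n : ℕ} (Y11 : Matrix (Fin (k - 1) × Fin m) (Fin n) F)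
    (Z : Matrix (Fin (k - 1) × Fin m) (Fin (k - 1) × Fin n) F)
    (T : Matrix (Fin m) (Fin n) F) :
    Matrix (Fin k × Fin m) (Fin k × Fin n) F :=
  Matrix.of fun p q =>
    if hp : (p.1 : ℕ) < k - 1 then
      if hq : (q.1 : ℕ) = 0 then Y11 (⟨(p.1 : ℕ), hp⟩, p.2) q.2
      else Z (⟨(p.1 : ℕ), hp⟩, p.2) (⟨(q.1 : ℕ) - 1, by have := q.1.isLt; omega⟩, q.2)
    else
      if hq : (q.1 : ℕ) = 0 then T p.2 q.2 else 0

/-- The `Z`-matrix of `L = λX + Y ∈ 𝕃₁(P)` with respect to `M`: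
the lower-left `(k-1)m × (k-1)n` block of `(M ⊗ I_m) Y`. -/
def Zmat1 {k m n : ℕ} (M : Matrix (Fin k) (Fin k) F)
    (Yc : Matrix (Fin k × Fin m) (Fin k × Fin n) F) :
    Matrix (Fin (k - 1) × Fin m) (Fin (k - 1) × Fin n) F :=
  Matrix.of fun p q =>
    (kronId M * Yc : Matrix (Fin k × Fin m) (Fin k × Fin n) F)
      (⟨(p.1 : ℕ) + 1, by have := p.1.isLt; omega⟩, p.2)
      (⟨(q.1 : ℕ), by have := q.1.isLt; omega⟩, q.2)

/-- The `Z`-matrix of `L = λX + Y ∈ 𝕃₂(P)` with respect to `M̂`: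
the upper-right `(k-1)m × (k-1)n` block of `Y (M̂ᵀ ⊗ I_n)`. -/
def Zmat2 {k m n : ℕ} (M : Matrix (Fin k) (Fin k) F)
    (Yc : Matrix (Fin k × Fin m) (Fin k × Fin n) F) :
    Matrix (Fin (k - 1) × Fin m) (Fin (k - 1) × Fin n) F :=
  Matrix.of fun p q =>
    (Yc * kronId Mᵀ : Matrix (Fin k × Fin m) (Fin k × Fin n) F)
      (⟨(p.1 : ℕ), by have := p.1.isLt; omega⟩, p.2)
      (⟨(q.1 : ℕ) + 1, by have := q.1.isLt; omega⟩, q.2)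

/-- `L = λX + Y ∈ 𝕃₁(P)` with right ansatz vector `v` has full `Z`-rank. -/
def FullZrank1 {k m n : ℕ} (Yc : Matrix (Fin k × Fin m) (Fin k × Fin n) F)
    (v : Fin k → F) : Prop :=
  ∃ (M : Matrix (Fin k) (Fin k) F) (α : F),
    IsUnit M ∧ α ≠ 0 ∧ M.mulVec v = e1 α ∧ (Zmat1 M Yc).rank = (k - 1) * n

/-- `L = λX + Y ∈ 𝕃₂(P)` with left ansatz vector `w` has full `Z`-rank. -/
def FullZrank2 {k m n : ℕ} (Yc : Matrix (Fin k × Fin m) (Fin k × Fin n) F)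
    (w : Fin k → F) : Prop :=
  ∃ (M : Matrix (Fin k) (Fin k) F) (α : F),
    IsUnit M ∧ α ≠ 0 ∧ M.mulVec w = e1 α ∧ (Zmat2 M Yc).rank = (k - 1) * m

/-! ### null spaces, minimal bases and minimal indices over `F(λ)` -/

/-- A matrix polynomial viewed as a matrix over the field of rational functions. -/
def matRF {ρ γ : Type*} (P : Matrix ρ γ F[X]) : Matrix ρ γ (RatFunc F) :=
  P.map (algebraMap F[X] (RatFunc F))

/-- The right null space `N_r(P) = {x(λ) : P(λ) x(λ) ≡ 0}` over `F(λ)`. -/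
def Nr {ρ γ : Type*} [Fintype γ] (P : Matrix ρ γ F[X]) :
    Submodule (RatFunc F) (γ → RatFunc F) :=
  LinearMap.ker (Matrix.mulVecLin (matRF P))

/-- The left null space `N_l(P) = {y(λ) : y(λ)ᵀ P(λ) ≡ 0}` over `F(λ)`. -/
def Nl {ρ γ : Type*} [Fintype ρ] (P : Matrix ρ γ F[X]) :
    Submodule (RatFunc F) (ρ → RatFunc F) :=
  Nr Pᵀ

/-- The normal rank of a matrix polynomial: its rank over `F(λ)`. -/
def nrank {ρ γ : Type*} [Fintype γ] (P : Matrix ρ γ F[X]) : ℕ :=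
  (matRF P).rank

/-- The rational vector determined by a vector polynomial. -/
def polyVec {γ : Type*} (x : γ → F[X]) : γ → RatFunc F :=
  fun i => algebraMap F[X] (RatFunc F) (x i)

/-- A rational vector is a vector polynomial if all its entries are polynomials. -/
def IsVecPoly {γ : Type*} (x : γ → RatFunc F) : Prop :=
  ∃ p : γ → F[X], x = polyVec p

/-- The degree of a vector polynomial: the greatest degree of its components. -/
def polyVecDeg {γ : Type*} [Fintype γ] (x : γ → F[X]) : ℕ :=
  Finset.univ.sup fun i => (x i).natDegree

/-- A polynomial basis of the subspace `V` of `F(λ)^γ`. -/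
def IsPolyBasis {γ ι : Type*} [Fintype γ]
    (V : Submodule (RatFunc F) (γ → RatFunc F)) (b : ι → γ → F[X]) : Prop :=
  LinearIndependent (RatFunc F) (fun i => polyVec (b i)) ∧
    Submodule.span (RatFunc F) (Set.range fun i => polyVec (b i)) = V

/-- A minimal basis of `V`: a polynomial basis of least order (sum of degrees). -/
def IsMinimalBasis {γ ι : Type*} [Fintype γ] [Fintype ι]
    (V : Submodule (RatFunc F) (γ → RatFunc F)) (b : ι → γ → F[X]) : Prop :=
  IsPolyBasis V b ∧
    ∀ (d : ℕ) (b' : Fin d → γ → F[X]), IsPolyBasis V b' →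
      ∑ i, polyVecDeg (b i) ≤ ∑ i, polyVecDeg (b' i)

/-- `ε` is the list of minimal indices of `V`: some minimal basis of `V` has
`ε` as its list of degrees. -/
def HasMinIndices {γ : Type*} [Fintype γ]
    (V : Submodule (RatFunc F) (γ → RatFunc F)) {d : ℕ} (ε : Fin d → ℕ) : Prop :=
  ∃ b : Fin d → γ → F[X], IsMinimalBasis V b ∧ ∀ i, polyVecDeg (b i) = ε i

/-- `Λ_k(λ) ⊗ x(λ)`. -/
def lamTensor {n : ℕ} (k : ℕ) (x : Fin n → RatFunc F) : Fin k × Fin n → RatFunc F :=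
  fun p => algebraMap F[X] (RatFunc F) (Polynomial.X ^ (k - 1 - (p.1 : ℕ))) * x p.2

/-- The matrix `vᵀ ⊗ I_m` over `F(λ)`; `𝓛_v(y) = (vproj v).mulVec y`. -/
def vproj {k m : ℕ} (v : Fin k → F) : Matrix (Fin m) (Fin k × Fin m) (RatFunc F) :=
  Matrix.of fun r p =>
    if r = p.2 then algebraMap F[X] (RatFunc F) (Polynomial.C (v p.1)) else 0

/-- `(vᵀ ⊗ I_m) y` at the level of vector polynomials. -/
def LvPoly {k m : ℕ} (v : Fin k → F) (y : Fin k × Fin m → F[X]) : Fin m → F[X] :=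
  fun r => ∑ i : Fin k, Polynomial.C (v i) * y (i, r)

/-- The rational subspace spanned by the rows of a matrix polynomial. -/
def rowSpan {ρ γ : Type*} [Fintype γ] (B : Matrix ρ γ F[X]) :
    Submodule (RatFunc F) (γ → RatFunc F) :=
  Submodule.span (RatFunc F) (Set.range fun i => polyVec (B i))

/-- A matrix polynomial is a minimal basis if its rows form a minimal basis of the
rational subspace they span. -/
def IsMinimalBasisMat {ρ γ : Type*} [Fintype ρ] [Fintype γ] (B : Matrix ρ γ F[X]) : Prop :=
  IsMinimalBasis (rowSpan B) (fun i => B i)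

/-- Dual minimal bases: `B ∈ F[λ]^{n₁×n}`, `C ∈ F[λ]^{n₂×n}` minimal bases with
`n₁ + n₂ = n` and `B Cᵀ = 0`. -/
def DualMinBases {ρ ρ' γ : Type*} [Fintype ρ] [Fintype ρ'] [Fintype γ]
    (B : Matrix ρ γ F[X]) (Cm : Matrix ρ' γ F[X]) : Prop :=
  IsMinimalBasisMat B ∧ IsMinimalBasisMat Cm ∧
    Fintype.card ρ + Fintype.card ρ' = Fintype.card γ ∧ B * Cmᵀ = 0

/-! ### norms, singular values -/

/-- Square of the Frobenius norm of a constant matrix. -/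
def frobSq {ρ γ : Type*} [Fintype ρ] [Fintype γ] (Ac : Matrix ρ γ F) : ℝ :=
  ∑ i, ∑ j, ‖Ac i j‖ ^ 2

/-- `‖λX + Y‖_F = sqrt(‖X‖_F² + ‖Y‖_F²)`. -/
def penFrob {ρ γ : Type*} [Fintype ρ] [Fintype γ] (Xc Yc : Matrix ρ γ F) : ℝ :=
  Real.sqrt (frobSq Xc + frobSq Yc)

/-- `‖P‖_F = sqrt(∑ ‖A_i‖_F²)` for `P(λ) = ∑ λ^i A_i`. -/
def famFrob {k m n : ℕ} (A : Fin (k + 1) → Matrix (Fin m) (Fin n) F) : ℝ :=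
  Real.sqrt (∑ i, frobSq (A i))

/-- `‖P‖_F` for a matrix polynomial of grade `g`. -/
def mpolyFrob {ρ γ : Type*} [Fintype ρ] [Fintype γ] (g : ℕ) (P : Matrix ρ γ F[X]) : ℝ :=
  Real.sqrt (∑ i, ∑ j, ∑ d ∈ Finset.range (g + 1), ‖(P i j).coeff d‖ ^ 2)

/-- Square of the Euclidean norm of a vector. -/
def vecNormSq {ι : Type*} [Fintype ι] (x : ι → F) : ℝ := ∑ i, ‖x i‖ ^ 2

/-- The smallest singular value of a matrix. -/
def sigmaMin {ρ γ : Type*} [Fintype ρ] [Fintype γ] (Ac : Matrix ρ γ F) : ℝ :=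
  if Fintype.card γ ≤ Fintype.card ρ then
    sInf {r : ℝ | ∃ x : γ → F, vecNormSq x = 1 ∧ r = Real.sqrt (vecNormSq (Ac.mulVec x))}
  else
    sInf {r : ℝ | ∃ y : ρ → F, vecNormSq y = 1 ∧ r = Real.sqrt (vecNormSq (Acᴴ.mulVec y))}

/-- The spectral norm (2-norm) of a matrix. -/
def norm2 {ρ γ : Type*} [Fintype ρ] [Fintype γ] (Ac : Matrix ρ γ F) : ℝ :=
  sSup {r : ℝ | ∃ x : γ → F, vecNormSq x = 1 ∧ r = Real.sqrt (vecNormSq (Ac.mulVec x))}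

/-- `κ₂(D) = ‖D‖₂ ‖D⁻¹‖₂`. -/
def cond2 {ρ : Type*} [Fintype ρ] [DecidableEq ρ] (Dc : Matrix ρ ρ F) : ℝ :=
  norm2 Dc * norm2 Dc⁻¹

/-! ### pencils used in the backward error analysis -/

/-- `B(λ) = λ [0 ∣ -R̃] + [R̃ ∣ 0]`, i.e. `R̃ (H_{k-1}(λ) ⊗ I_n)` up to sign conventions. -/
def Bpencil {k n : ℕ} (R : Matrix (Fin (k - 1) × Fin n) (Fin (k - 1) × Fin n) F) :
    Matrix (Fin (k - 1) × Fin n) (Fin k × Fin n) F[X] :=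
  Matrix.of fun p q =>
    (if h : (q.1 : ℕ) < k - 1 then Polynomial.C (R p (⟨(q.1 : ℕ), h⟩, q.2)) else 0) +
    (if h : 0 < (q.1 : ℕ) then
        Polynomial.X *
          Polynomial.C (-R p (⟨(q.1 : ℕ) - 1, by have := q.1.isLt; omega⟩, q.2))
      else 0)

/-- The coefficient of `λ` in `H_{k-1}(λ) ⊗ I_n`. -/
def Hlam (F : Type*) [RCLike F] (k n : ℕ) :
    Matrix (Fin (k - 1) × Fin n) (Fin k × Fin n) F :=
  Matrix.of fun p q => if p.2 = q.2 ∧ (q.1 : ℕ) = (p.1 : ℕ) + 1 then 1 else 0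

/-- The constant coefficient of `H_{k-1}(λ) ⊗ I_n`. -/
def Hconst (F : Type*) [RCLike F] (k n : ℕ) :
    Matrix (Fin (k - 1) × Fin n) (Fin k × Fin n) F :=
  Matrix.of fun p q => if p.2 = q.2 ∧ (q.1 : ℕ) = (p.1 : ℕ) then -1 else 0

/-- The convolution matrix `C_j(λ Xc + Yc)` of a pencil, with `j+1` block columns. -/
def convPencil {ρ γ : Type*} (Xc Yc : Matrix ρ γ F) (j : ℕ) :
    Matrix (Fin (j + 2) × ρ) (Fin (j + 1) × γ) F :=
  Matrix.of fun r c =>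
    if (r.1 : ℕ) = (c.1 : ℕ) then Xc r.2 c.2
    else if (r.1 : ℕ) = (c.1 : ℕ) + 1 then Yc r.2 c.2 else 0

/-- λ-coefficient of the trimmed pencil `L̂_t(λ)`:
`[[α A_k, X₁₂],[0, -R̃]]` with row split `m + (k-1)n`. -/
def LtX {k m n : ℕ} (α : F) (Ak : Matrix (Fin m) (Fin n) F)
    (X12 : Matrix (Fin m) (Fin (k - 1) × Fin n) F)
    (R : Matrix (Fin (k - 1) × Fin n) (Fin (k - 1) × Fin n) F) :
    Matrix (Fin m ⊕ (Fin (k - 1) × Fin n)) (Fin k × Fin n) F :=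
  Matrix.of fun s q =>
    Sum.elim
      (fun r => if h : (q.1 : ℕ) = 0 then α * Ak r q.2
        else X12 r (⟨(q.1 : ℕ) - 1, by have := q.1.isLt; omega⟩, q.2))
      (fun p => if h : (q.1 : ℕ) = 0 then 0
        else -R p (⟨(q.1 : ℕ) - 1, by have := q.1.isLt; omega⟩, q.2)) s

/-- Constant coefficient of the trimmed pencil `L̂_t(λ)`:
`[[Y₁₁, α A₀],[R̃, 0]]` with row split `m + (k-1)n`. -/
def LtY {k m n : ℕ} (α : F) (A0 : Matrix (Fin m) (Fin n) F)
    (Y11 : Matrix (Fin m) (Fin (k - 1) × Fin n) F)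
    (R : Matrix (Fin (k - 1) × Fin n) (Fin (k - 1) × Fin n) F) :
    Matrix (Fin m ⊕ (Fin (k - 1) × Fin n)) (Fin k × Fin n) F :=
  Matrix.of fun s q =>
    Sum.elim
      (fun r => if h : (q.1 : ℕ) < k - 1 then Y11 r (⟨(q.1 : ℕ), h⟩, q.2)
        else α * A0 r q.2)
      (fun p => if h : (q.1 : ℕ) < k - 1 then R p (⟨(q.1 : ℕ), h⟩, q.2) else 0) s

/-! ### trimming -/

/-- The rows `[0 ∣ Q₂*] (M ⊗ I_m)`. -/
def bottomRows {k m n c : ℕ} (M : Matrix (Fin k) (Fin k) F)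
    (Q : Matrix (Fin (k - 1) × Fin m) ((Fin (k - 1) × Fin n) ⊕ Fin c) F) :
    Matrix (Fin c) (Fin k × Fin m) F :=
  (Matrix.of fun (j : Fin c) (p : Fin k × Fin m) =>
      if h : (p.1 : ℕ) = 0 then 0
      else star (Q (⟨(p.1 : ℕ) - 1, by have := p.1.isLt; omega⟩, p.2) (Sum.inr j)))
    * kronId M

/-- The square matrix `[D ; [0 ∣ Q₂*](M ⊗ I_m)]` whose invertibility makes `D` admissible. -/
def trimAux {k m n c : ℕ} (M : Matrix (Fin k) (Fin k) F)
    (Q : Matrix (Fin (k - 1) × Fin m) ((Fin (k - 1) × Fin n) ⊕ Fin c) F)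
    (D : Matrix (Fin m ⊕ (Fin (k - 1) × Fin n)) (Fin k × Fin m) F) :
    Matrix ((Fin m ⊕ (Fin (k - 1) × Fin n)) ⊕ Fin c) (Fin k × Fin m) F :=
  Matrix.of (Sum.elim (fun i j => D i j) (fun i j => bottomRows M Q i j))

/-- The columns `(M̂ᵀ ⊗ I_n) [0 ; Q₂]`. -/
def rightCols {k m n c : ℕ} (M : Matrix (Fin k) (Fin k) F)
    (Q : Matrix (Fin (k - 1) × Fin n) ((Fin (k - 1) × Fin m) ⊕ Fin c) F) :
    Matrix (Fin k × Fin n) (Fin c) F :=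
  kronId Mᵀ *
    (Matrix.of fun (q : Fin k × Fin n) (j : Fin c) =>
      if h : (q.1 : ℕ) = 0 then 0
      else Q (⟨(q.1 : ℕ) - 1, by have := q.1.isLt; omega⟩, q.2) (Sum.inr j))

/-- The square matrix `[D̂ ∣ (M̂ᵀ ⊗ I_n)[0 ; Q₂]]` whose invertibility makes `D̂` admissible. -/
def trimAux2 {k m n c : ℕ} (M : Matrix (Fin k) (Fin k) F)
    (Q : Matrix (Fin (k - 1) × Fin n) ((Fin (k - 1) × Fin m) ⊕ Fin c) F)
    (D : Matrix (Fin k × Fin n) (Fin n ⊕ (Fin (k - 1) × Fin m)) F) :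
    Matrix (Fin k × Fin n) ((Fin n ⊕ (Fin (k - 1) × Fin m)) ⊕ Fin c) F :=
  Matrix.of fun q s => Sum.elim (fun t => D q t) (fun j => rightCols M Q q j) s

section Statement0Aux

lemma coeff_pencil_mul_lam {k m n : ℕ}
    (Xc Yc : Matrix (Fin k × Fin m) (Fin k × Fin n) F)
    (p : Fin k × Fin m) (c : Fin n) (d : ℕ) :
    ((pencil Xc Yc * Lam F k n) p c).coeff d =
      (if h : 1 ≤ d ∧ d ≤ k then Xc p (⟨k - d, by omega⟩, c) else 0) +
      (if h : d < k then Yc p (⟨k - 1 - d, by omega⟩, c) else 0) := by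
  rw [Matrix.mul_apply, Fintype.sum_prod_type]
  simp only [pencil, Lam, Matrix.of_apply, mul_ite, mul_zero,
    Finset.sum_ite_eq', Finset.mem_univ, if_true]
  rw [Polynomial.finset_sum_coeff]
  have hterm : ∀ j : Fin k,
      ((Polynomial.C (Xc p (j, c)) * Polynomial.X + Polynomial.C (Yc p (j, c))) *
        Polynomial.X ^ (k - 1 - (j : ℕ))).coeff d =
      (if d = k - 1 - (j : ℕ) + 1 then Xc p (j, c) else 0) +
      (if d = k - 1 - (j : ℕ) then Yc p (j, c) else 0) := by
    intro j
    rw [add_mul, mul_assoc, ← pow_succ']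
    simp [Polynomial.coeff_add, Polynomial.coeff_C_mul, Polynomial.coeff_X_pow]
  simp only [hterm]
  rw [Finset.sum_add_distrib]
  congr 1
  · by_cases h : 1 ≤ d ∧ d ≤ k
    · rw [dif_pos h]
      rw [Finset.sum_eq_single (⟨k - d, by omega⟩ : Fin k)]
      · rw [if_pos (by simp; omega)]
      · intro b _ hb
        rw [if_neg]
        intro heq
        exact hb (by ext; have := b.isLt; simp; omega)
      · simp
    · rw [dif_neg h]
      refine Finset.sum_eq_zero fun b _ => ?_
      rw [if_neg]
      have := b.isLt; omega
  · by_cases h : d < k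
    · rw [dif_pos h]
      rw [Finset.sum_eq_single (⟨k - 1 - d, by omega⟩ : Fin k)]
      · rw [if_pos (by simp; omega)]
      · intro b _ hb
        rw [if_neg]
        intro heq
        exact hb (by ext; have := b.isLt; simp; omega)
      · simp
    · rw [dif_neg h]
      refine Finset.sum_eq_zero fun b _ => ?_
      rw [if_neg]
      have := b.isLt; omega

lemma coeff_vkron_matPoly {k m n : ℕ}
    (A : Fin (k + 1) → Matrix (Fin m) (Fin n) F) (v : Fin k → F)
    (p : Fin k × Fin m) (c : Fin n) (d : ℕ) :
    (vkron v (matPoly A) p c).coeff d =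
      if h : d ≤ k then v p.1 * A ⟨d, by omega⟩ p.2 c else 0 := by
  simp only [vkron, matPoly, Matrix.of_apply, Polynomial.coeff_C_mul,
    Polynomial.finset_sum_coeff, Polynomial.coeff_X_pow, mul_ite, mul_one, mul_zero]
  by_cases h : d ≤ k
  · rw [dif_pos h, Finset.mul_sum]
    rw [Finset.sum_eq_single (⟨d, by omega⟩ : Fin (k + 1))]
    · simp
    · intro b _ hb
      rw [if_neg (by simpa using fun heq => hb (by ext; simp [heq])), mul_zero]
    · simp
  · rw [dif_neg h, Finset.mul_sum]
    refine Finset.sum_eq_zero fun b _ => ?_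
    rw [if_neg (by have := b.isLt; omega), mul_zero]

lemma right_ansatz_iff {k m n : ℕ} (hk : 0 < k)
    (A : Fin (k + 1) → Matrix (Fin m) (Fin n) F)
    (Xc Yc : Matrix (Fin k × Fin m) (Fin k × Fin n) F) (v : Fin k → F) :
    RightAnsatz (matPoly A) (pencil Xc Yc) v ↔
      colShiftSum Xc Yc =
        Matrix.of fun (p : Fin k × Fin m) (q : Fin (k + 1) × Fin n) =>
          v p.1 * A (⟨k - (q.1 : ℕ), Nat.lt_succ_of_le (Nat.sub_le _ _)⟩) p.2 q.2 := by
  unfold RightAnsatz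
  constructor
  · intro h
    ext p q
    obtain ⟨j, c⟩ := q
    have h' := congrArg (fun M : Matrix (Fin k × Fin m) (Fin n) F[X] =>
      (M p c).coeff (k - (j : ℕ))) h
    simp only [coeff_pencil_mul_lam, coeff_vkron_matPoly] at h'
    have hj := j.isLt
    have e1 : k - (k - (j : ℕ)) = (j : ℕ) := by omega
    have e2 : k - 1 - (k - (j : ℕ)) = (j : ℕ) - 1 := by omega
    simp only [e1, e2] at h'
    have e3 : (j : ℕ) - 1 = k - 1 - (k - (j:ℕ)) := by omega
    simp only [colShiftSum, Matrix.of_apply]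
    split_ifs at h' ⊢ <;> (try simp_all) <;> omega
  · intro h
    ext p c d
    rw [coeff_pencil_mul_lam, coeff_vkron_matPoly]
    by_cases hd : d ≤ k
    · have h' := congrFun (congrFun h p) (⟨k - d, by omega⟩, c)
      simp only [colShiftSum, Matrix.of_apply] at h'
      have e1 : k - (k - d) = d := by omega
      have e3 : k - d - 1 = k - 1 - d := by omega
      simp only [e1, e3] at h'
      split_ifs at h' ⊢ <;> (try simp_all) <;> omega
    · rw [dif_neg (by omega), dif_neg (by omega), dif_neg hd, add_zero]

lemma pencil_transpose {ρ γ : Type*} (Xc Yc : Matrix ρ γ F) :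
    (pencil Xc Yc)ᵀ = pencil Xcᵀ Ycᵀ := by
  ext i j; simp [pencil, Matrix.transpose_apply]

lemma lamRow_transpose (k m : ℕ) : (LamRow F k m)ᵀ = Lam F k m := by
  ext p r
  simp only [LamRow, Lam, Matrix.transpose_apply, Matrix.of_apply]
  simp [eq_comm]

lemma wkron_transpose {k m n : ℕ} (w : Fin k → F) (P : Matrix (Fin m) (Fin n) F[X]) :
    (wkron w P)ᵀ = vkron w Pᵀ := by
  ext q r; simp [wkron, vkron, Matrix.transpose_apply]

lemma matPoly_transpose {k m n : ℕ} (A : Fin (k + 1) → Matrix (Fin m) (Fin n) F) :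
    (matPoly A)ᵀ = matPoly (fun i => (A i)ᵀ) := by
  ext i j; simp [matPoly, Matrix.transpose_apply]

lemma rowShiftSum_eq {k m n : ℕ} (Xc Yc : Matrix (Fin k × Fin m) (Fin k × Fin n) F) :
    rowShiftSum Xc Yc = (colShiftSum Xcᵀ Ycᵀ)ᵀ := by
  ext p q; simp [rowShiftSum, colShiftSum, Matrix.transpose_apply]

end Statement0Aux

/-- For a grade-`k`, `m × n` matrix polynomial `P(λ) = ∑ λ^i A_i` and a
`km × kn` pencil `L(λ) = λX + Y`: for every `v`, `L(λ)(Λ_k(λ) ⊗ I_n) = v ⊗ P(λ)` iff the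
column shifted sum `X ⊞→ Y` equals `v ⊗ [A_k ⋯ A_0]`; and for every `w`,
`(Λ_k(λ)ᵀ ⊗ I_m) L(λ) = wᵀ ⊗ P(λ)` iff the row shifted sum `X ⊞↓ Y`
equals `wᵀ ⊗ [A_kᵀ ⋯ A_0ᵀ]ᵀ`. -/
theorem statement_0 {F : Type*} [RCLike F] {k m n : ℕ} (hk : 0 < k)
    (A : Fin (k + 1) → Matrix (Fin m) (Fin n) F)
    (Xc Yc : Matrix (Fin k × Fin m) (Fin k × Fin n) F) :
    (∀ v : Fin k → F,
      RightAnsatz (matPoly A) (pencil Xc Yc) v ↔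
        colShiftSum Xc Yc =
          Matrix.of fun (p : Fin k × Fin m) (q : Fin (k + 1) × Fin n) =>
            v p.1 * A (⟨k - (q.1 : ℕ), by have := q.1.isLt; omega⟩) p.2 q.2) ∧
    (∀ w : Fin k → F,
      LeftAnsatz (matPoly A) (pencil Xc Yc) w ↔
        rowShiftSum Xc Yc =
          Matrix.of fun (p : Fin (k + 1) × Fin m) (q : Fin k × Fin n) =>
            w q.1 * A (⟨k - (p.1 : ℕ), by have := p.1.isLt; omega⟩) p.2 q.2) := by
  constructor
  · intro v
    exact right_ansatz_iff hk A Xc Yc v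
  · intro w
    have h := right_ansatz_iff hk (fun i => (A i)ᵀ) Xcᵀ Ycᵀ w
    unfold RightAnsatz at h
    unfold LeftAnsatz
    constructor
    · intro hL
      have h2 : pencil Xcᵀ Ycᵀ * Lam F k m = vkron w (matPoly fun i => (A i)ᵀ) := by
        rw [← pencil_transpose, ← lamRow_transpose, ← Matrix.transpose_mul, hL,
          wkron_transpose, matPoly_transpose]
      have h3 := h.mp h2
      rw [rowShiftSum_eq, h3]
      ext p q
      simp [Matrix.transpose_apply]
    · intro hS
      have h4 : colShiftSum Xcᵀ Ycᵀ =
          Matrix.of fun (p : Fin k × Fin n) (q : Fin (k + 1) × Fin m) =>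
            w p.1 * (A (⟨k - (q.1 : ℕ), by have := q.1.isLt; omega⟩))ᵀ p.2 q.2 := by
        rw [← Matrix.transpose_inj, ← rowShiftSum_eq, hS]
        ext p q
        simp [Matrix.transpose_apply]
      have h5 := h.mpr h4
      rw [← Matrix.transpose_inj, Matrix.transpose_mul, lamRow_transpose,
        pencil_transpose, wkron_transpose, matPoly_transpose]
      exact h5
end GLin
end
end

section
/- Let P(λ) = Σ_{i=0}^k λ^i A_i be an m×n matrix polynomial of grade k with m ≥ n, and let L(λ) = λX + Y ∈ 𝕃₁(P) have right ansatz vector v ≠ 0. Suppose M₁, M₂ ∈ F^{k×k} are nonsingular matrices with M₁v = α₁e₁ and M₂v = α₂e₁ for some α₁ ≠ 0 and α₂ ≠ 0. If Z₁, Z₂ ∈ F^{(k-1)m×(k-1)n} are the matrices appearing in the Z-block of the reductions (M₁⊗I_m)L(λ) and (M₂⊗I_m)L(λ) respectively, then rank Z₁ = rank Z₂. -/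
noncomputable section

open Polynomial Matrix

namespace GLin

variable {F : Type*} [RCLike F]

lemma sum_fin_split {k : ℕ} (hk : 0 < k) {M : Type*} [AddCommMonoid M] (f : Fin k → M) :
    ∑ l : Fin k, f l = f ⟨0, hk⟩ + ∑ l : Fin (k - 1), f ⟨(l : ℕ) + 1, by omega⟩ := by
  have h : k - 1 + 1 = k := by omega
  rw [← (finCongr h).sum_comp, Fin.sum_univ_succ]
  rfl

lemma kronId_mul_apply {k m : ℕ} {γ : Type*} [Fintype γ] (M : Matrix (Fin k) (Fin k) F)
    (Y : Matrix (Fin k × Fin m) γ F) (p : Fin k × Fin m) (q : γ) :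
    ((kronId M * Y : Matrix (Fin k × Fin m) γ F)) p q
      = ∑ j : Fin k, M p.1 j * Y (j, p.2) q := by
  rw [show (kronId M * Y : Matrix (Fin k × Fin m) γ F) p q = ∑ x, kronId M p x * Y x q from rfl,
    Fintype.sum_prod_type]
  simp [kronId, Finset.sum_comm]

lemma mulVec_e1 {k : ℕ} (hk : 0 < k) (Q : Matrix (Fin k) (Fin k) F) (α : F) (i : Fin k) :
    Q.mulVec (e1 α) i = Q i ⟨0, hk⟩ * α := by
  rw [Matrix.mulVec, dotProduct]
  rw [Finset.sum_eq_single (⟨0, hk⟩ : Fin k)]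
  · simp [e1]
  · intro j _ hj
    have : (j : ℕ) ≠ 0 := fun h => hj (Fin.ext h)
    simp [e1, this]
  · simp

/-- For `m ≥ n` and `L = λX + Y ∈ 𝕃₁(P)` with right ansatz vector
`v ≠ 0`: if `M₁, M₂` are nonsingular with `M₁v = α₁e₁`, `M₂v = α₂e₁` (`α₁, α₂ ≠ 0`), then
the `Z`-matrices of the two reductions have the same rank. -/
theorem statement_4 {F : Type*} [RCLike F] {k m n : ℕ} (hk : 0 < k) (hmn : n ≤ m)
    (A : Fin (k + 1) → Matrix (Fin m) (Fin n) F)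
    (Xc Yc : Matrix (Fin k × Fin m) (Fin k × Fin n) F)
    (v : Fin k → F) (hv : v ≠ 0)
    (hL : RightAnsatz (matPoly A) (pencil Xc Yc) v)
    (M₁ M₂ : Matrix (Fin k) (Fin k) F) (hM₁ : IsUnit M₁) (hM₂ : IsUnit M₂)
    (α₁ α₂ : F) (hα₁ : α₁ ≠ 0) (hα₂ : α₂ ≠ 0)
    (h1 : M₁.mulVec v = e1 α₁) (h2 : M₂.mulVec v = e1 α₂) :
    (Zmat1 M₁ Yc).rank = (Zmat1 M₂ Yc).rank := by
  classical
  have hdet₁ : IsUnit M₁.det := (Matrix.isUnit_iff_isUnit_det M₁).mp hM₁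
  have hdet₂ : IsUnit M₂.det := (Matrix.isUnit_iff_isUnit_det M₂).mp hM₂
  set N : Matrix (Fin k) (Fin k) F := M₂ * M₁⁻¹ with hNdef
  set P : Matrix (Fin k) (Fin k) F := M₁ * M₂⁻¹ with hPdef
  have hNM : N * M₁ = M₂ := Matrix.nonsing_inv_mul_cancel_right M₁ M₂ hdet₁
  have hPM : P * M₂ = M₁ := Matrix.nonsing_inv_mul_cancel_right M₂ M₁ hdet₂
  have hNP : N * P = 1 := by
    rw [hPdef, ← Matrix.mul_assoc, hNM, Matrix.mul_nonsing_inv M₂ hdet₂]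
  have hNe : N.mulVec (e1 α₁) = e1 α₂ := by
    rw [← h1, Matrix.mulVec_mulVec, hNM, h2]
  have hPe : P.mulVec (e1 α₂) = e1 α₁ := by
    rw [← h2, Matrix.mulVec_mulVec, hPM, h1]
  have hN0 : ∀ i : Fin k, (i : ℕ) ≠ 0 → N i ⟨0, hk⟩ = 0 := by
    intro i hi
    have h := congrFun hNe i
    rw [mulVec_e1 hk] at h
    have : e1 (k := k) α₂ i = 0 := by simp [e1, hi]
    rw [this] at h
    exact (mul_eq_zero.mp h).resolve_right hα₁
  set S : Matrix (Fin (k - 1)) (Fin (k - 1)) F :=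
    fun i j => N ⟨(i : ℕ) + 1, by omega⟩ ⟨(j : ℕ) + 1, by omega⟩ with hSdef
  set T : Matrix (Fin (k - 1)) (Fin (k - 1)) F :=
    fun i j => P ⟨(i : ℕ) + 1, by omega⟩ ⟨(j : ℕ) + 1, by omega⟩ with hTdef
  have hST : S * T = 1 := by
    ext i j
    have h := congrFun (congrFun hNP (⟨(i : ℕ) + 1, by omega⟩ : Fin k))
      (⟨(j : ℕ) + 1, by omega⟩ : Fin k)
    rw [Matrix.mul_apply, sum_fin_split hk] at h
    rw [hN0 _ (by simp), zero_mul] at h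
    rw [zero_add] at h
    rw [Matrix.mul_apply]
    rw [show (∑ l, S i l * T l j) = ∑ l : Fin (k - 1),
      N ⟨(i : ℕ) + 1, by omega⟩ ⟨(l : ℕ) + 1, by omega⟩ *
        P ⟨(l : ℕ) + 1, by omega⟩ ⟨(j : ℕ) + 1, by omega⟩ from rfl, h]
    simp [Matrix.one_apply, Fin.ext_iff]
  have hkron : (kronId (m := m) S) * (kronId T) = 1 := by
    ext p q
    erw [kronId_mul_apply]
    by_cases hpq : p.2 = q.2
    · simp only [kronId, Matrix.of_apply, hpq, if_true]
      rw [← Matrix.mul_apply, hST]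
      simp [Matrix.one_apply, Prod.ext_iff, hpq]
    · simp [kronId, hpq, Matrix.one_apply, Prod.ext_iff]
  have hSunit : IsUnit (kronId (m := m) S).det := by
    apply IsUnit.of_mul_eq_one (kronId (m := m) T).det
    rw [← Matrix.det_mul, hkron, Matrix.det_one]
  have key : Zmat1 M₂ Yc = kronId S * Zmat1 M₁ Yc := by
    ext ⟨p, r⟩ ⟨q, c⟩
    rw [kronId_mul_apply]
    simp only [Zmat1, Matrix.of_apply]
    rw [kronId_mul_apply M₂]
    have step1 : ∀ j : Fin k, M₂ ⟨(p : ℕ) + 1, by omega⟩ j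
        = ∑ l : Fin k, N ⟨(p : ℕ) + 1, by omega⟩ l * M₁ l j := by
      intro j; rw [← hNM, Matrix.mul_apply]
    calc ∑ j : Fin k, M₂ ⟨(p : ℕ) + 1, by omega⟩ j *
            Yc (j, r) (⟨(q : ℕ), by omega⟩, c)
        = ∑ j : Fin k, ∑ l : Fin k, N ⟨(p : ℕ) + 1, by omega⟩ l * M₁ l j *
            Yc (j, r) (⟨(q : ℕ), by omega⟩, c) := by
          simp_rw [step1, Finset.sum_mul]
      _ = ∑ l : Fin k, N ⟨(p : ℕ) + 1, by omega⟩ l *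
            ∑ j : Fin k, M₁ l j * Yc (j, r) (⟨(q : ℕ), by omega⟩, c) := by
          rw [Finset.sum_comm]
          simp_rw [Finset.mul_sum, mul_assoc]
      _ = ∑ l : Fin (k - 1), S p l *
            ((kronId M₁ * Yc : Matrix (Fin k × Fin m) (Fin k × Fin n) F)
              (⟨(l : ℕ) + 1, by omega⟩, r) (⟨(q : ℕ), by omega⟩, c)) := by
          rw [sum_fin_split hk]
          rw [hN0 _ (by simp), zero_mul, zero_add]
          refine Finset.sum_congr rfl fun l _ => ?_
          rw [kronId_mul_apply]
  rw [key]
  exact (Matrix.rank_mul_eq_right_of_isUnit_det _ _ hSunit).symm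

end GLin
end
end

section
/- Let P(λ) be an m×n matrix polynomial of grade k with m ≥ n, let L(λ) ∈ 𝕃₁(P) have nonzero right ansatz vector v, and let x(λ) ∈ F(λ)^n. Then Λ_k(λ)⊗x(λ) ∈ N_r(L) if and only if x(λ) ∈ N_r(P). Moreover, if L(λ) is a g-linearization of P(λ), then the map R_Λ : N_r(P) → N_r(L) given by x(λ) ↦ Λ_k(λ)⊗x(λ) is an F(λ)-linear isomorphism, and x(λ) ∈ N_r(P) is a vector polynomial if and only if Λ_k(λ)⊗x(λ) is a vector polynomial. -/
noncomputable section

open Polynomial Matrix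

namespace GLin

variable {F : Type*} [RCLike F]

section Stmt6Helpers

variable {F : Type*} [RCLike F]

private lemma lamTensor_eq_mulVec {k n : ℕ} (x : Fin n → RatFunc F) :
    lamTensor k x = (matRF (Lam F k n)).mulVec x := by
  funext p
  simp only [lamTensor, matRF, Lam, Matrix.mulVec, dotProduct, Matrix.map_apply,
    Matrix.of_apply, apply_ite (algebraMap F[X] (RatFunc F)), map_zero, ite_mul, zero_mul]
  rw [Finset.sum_ite_eq Finset.univ p.2]
  simp

private lemma mem_Nr_iff {ρ γ : Type*} [Fintype γ] (P : Matrix ρ γ F[X])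
    (x : γ → RatFunc F) : x ∈ Nr P ↔ (matRF P).mulVec x = 0 := by
  simp [Nr, LinearMap.mem_ker, Matrix.mulVecLin_apply]

private lemma pencil_mulVec_lamTensor {k m n : ℕ}
    (A : Fin (k + 1) → Matrix (Fin m) (Fin n) F)
    (Xc Yc : Matrix (Fin k × Fin m) (Fin k × Fin n) F) (v : Fin k → F)
    (hL : RightAnsatz (matPoly A) (pencil Xc Yc) v) (x : Fin n → RatFunc F) :
    (matRF (pencil Xc Yc)).mulVec (lamTensor k x)
      = fun p => algebraMap F[X] (RatFunc F) (Polynomial.C (v p.1)) *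
          ((matRF (matPoly A)).mulVec x) p.2 := by
  have hL' : pencil Xc Yc * Lam F k n = vkron v (matPoly A) := hL
  rw [lamTensor_eq_mulVec, Matrix.mulVec_mulVec]
  have hm : matRF (pencil Xc Yc) * matRF (Lam F k n) = matRF (vkron v (matPoly A)) := by
    simp only [matRF, ← Matrix.map_mul, hL']
  rw [hm]
  funext p
  simp [matRF, vkron, Matrix.mulVec, dotProduct, Finset.mul_sum, mul_assoc]

private lemma key_iff {k m n : ℕ} (hk : 0 < k)
    (A : Fin (k + 1) → Matrix (Fin m) (Fin n) F)
    (Xc Yc : Matrix (Fin k × Fin m) (Fin k × Fin n) F) (v : Fin k → F) (hv : v ≠ 0)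
    (hL : RightAnsatz (matPoly A) (pencil Xc Yc) v) (x : Fin n → RatFunc F) :
    lamTensor k x ∈ Nr (pencil Xc Yc) ↔ x ∈ Nr (matPoly A) := by
  rw [mem_Nr_iff, mem_Nr_iff, pencil_mulVec_lamTensor A Xc Yc v hL x]
  constructor
  · intro h
    funext r
    obtain ⟨i, hi⟩ := Function.ne_iff.mp hv
    have h2 := congrFun h (i, r)
    simp only [Pi.zero_apply] at h2 ⊢
    rcases mul_eq_zero.mp h2 with h1 | h1
    · rw [FaithfulSMul.algebraMap_eq_zero_iff, Polynomial.C_eq_zero] at h1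
      exact absurd h1 hi
    · exact h1
  · intro h
    funext p
    simp [h]

private lemma lamTensor_injective {k n : ℕ} (hk : 0 < k)
    {x y : Fin n → RatFunc F} (h : lamTensor k x = lamTensor k y) : x = y := by
  funext c
  have h2 := congrFun h (⟨k - 1, by omega⟩, c)
  simpa [lamTensor, Nat.sub_self] using h2

private lemma mulVec_eq_zero_of_isUnit_det {r : Type*} [Fintype r] [DecidableEq r]
    (M : Matrix r r (RatFunc F)) (hM : IsUnit M.det) {y : r → RatFunc F}
    (h : M.mulVec y = 0) : y = 0 := by
  have h2 := congrArg (M⁻¹.mulVec) h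
  rwa [Matrix.mulVec_mulVec, Matrix.nonsing_inv_mul M hM, Matrix.one_mulVec,
    Matrix.mulVec_zero] at h2

private lemma mulVec_glinTarget {k m n : ℕ} (P : Matrix (Fin m) (Fin n) F[X])
    (y : Fin k × Fin n → RatFunc F) (p : Fin k × Fin m) :
    (matRF (glinTarget P)).mulVec y p =
      if (p.1 : ℕ) = 0 then ((matRF P).mulVec fun c => y (p.1, c)) p.2
      else if h : (p.2 : ℕ) < n then y (p.1, ⟨(p.2 : ℕ), h⟩) else 0 := by
  classical
  rcases p with ⟨i, r⟩
  simp only [Matrix.mulVec, dotProduct, matRF, Matrix.map_apply, glinTarget,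
    Matrix.of_apply]
  rw [Fintype.sum_prod_type]
  rw [Finset.sum_eq_single i]
  · by_cases h0 : (i : ℕ) = 0
    · simp [h0, Matrix.mulVec, dotProduct]
    · simp only [h0, if_true, if_false, if_pos rfl, _root_.map_zero, _root_.map_one,
        apply_ite (algebraMap F[X] (RatFunc F)), ite_mul, zero_mul, one_mul]
      by_cases hr : (r : ℕ) < n
      · rw [Finset.sum_eq_single (⟨(r : ℕ), hr⟩ : Fin n)]
        · simp [hr]
        · intro b _ hb
          rw [if_neg]
          intro hc
          exact hb (by ext; simp [← hc])
        · simp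
      · rw [dif_neg hr, Finset.sum_eq_zero]
        intro c _
        rw [if_neg]
        omega
  · intro b _ hb
    apply Finset.sum_eq_zero
    intro c _
    rw [if_neg (fun h => hb h.symm), map_zero, zero_mul]
  · simp

private lemma mem_Nr_glinTarget {k m n : ℕ} (hk : 0 < k) (hmn : n ≤ m)
    (P : Matrix (Fin m) (Fin n) F[X]) (y : Fin k × Fin n → RatFunc F) :
    y ∈ Nr (glinTarget (k := k) P) ↔
      ((fun c => y (⟨0, hk⟩, c)) ∈ Nr P ∧
        ∀ q : Fin k × Fin n, (q.1 : ℕ) ≠ 0 → y q = 0) := by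
  rw [mem_Nr_iff, mem_Nr_iff]
  constructor
  · intro h
    constructor
    · funext r
      have h2 := congrFun h (⟨0, hk⟩, r)
      rw [mulVec_glinTarget] at h2
      simpa using h2
    · rintro ⟨j, c⟩ hj
      have h2 := congrFun h (j, ⟨(c : ℕ), lt_of_lt_of_le c.isLt hmn⟩)
      rw [mulVec_glinTarget] at h2
      simp only [Pi.zero_apply] at h2 ⊢
      simpa [hj, c.isLt] using h2
  · rintro ⟨h0, hz⟩
    funext p
    rw [mulVec_glinTarget]
    by_cases hp : (p.1 : ℕ) = 0
    · have hp1 : p.1 = ⟨0, hk⟩ := by ext; exact hp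
      rw [if_pos hp, hp1]
      exact congrFun h0 p.2
    · rw [if_neg hp]
      by_cases hr : (p.2 : ℕ) < n
      · rw [dif_pos hr]
        exact hz _ hp
      · rw [dif_neg hr]
        rfl

set_option synthInstance.maxHeartbeats 400000 in
private def jmap (F : Type*) [RCLike F] (k n : ℕ) :
    (Fin n → RatFunc F) →ₗ[RatFunc F] (Fin k × Fin n → RatFunc F) where
  toFun x q := if (q.1 : ℕ) = 0 then x q.2 else 0
  map_add' x y := by
    funext q; by_cases h : (q.1 : ℕ) = 0 <;> simp [h]
  map_smul' c x := by
    funext q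
    simp only [RingHom.id_apply, Pi.smul_apply, smul_eq_mul]
    by_cases h : (q.1 : ℕ) = 0 <;> simp [h]

private lemma jmap_injective (k n : ℕ) (hk : 0 < k) :
    Function.Injective (jmap F k n) := by
  intro a b hab
  funext c
  have h2 := congrFun hab (⟨0, hk⟩, c)
  simpa [jmap] using h2

private lemma jmap_map_Nr {k m n : ℕ} (hk : 0 < k) (hmn : n ≤ m)
    (P : Matrix (Fin m) (Fin n) F[X]) :
    Submodule.map (jmap F k n) (Nr P) = Nr (glinTarget (k := k) P) := by
  ext y
  constructor
  · rintro ⟨x, hx, rfl⟩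
    rw [mem_Nr_glinTarget hk hmn]
    constructor
    · simpa [jmap] using hx
    · intro q hq
      simp [jmap, hq]
  · intro hy
    rw [mem_Nr_glinTarget hk hmn] at hy
    refine ⟨fun c => y (⟨0, hk⟩, c), hy.1, ?_⟩
    funext q
    by_cases hq : (q.1 : ℕ) = 0
    · have hq1 : q.1 = ⟨0, hk⟩ := by ext; exact hq
      simp [jmap, hq, ← hq1]
    · simp [jmap, hq, (hy.2 q hq).symm]

private lemma finrank_Nr_eq_of_glin {k m n : ℕ} (hk : 0 < k) (hmn : n ≤ m)
    (P : Matrix (Fin m) (Fin n) F[X])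
    (L : Matrix (Fin k × Fin m) (Fin k × Fin n) F[X]) (hGL : IsGLin P L) :
    Module.finrank (RatFunc F) (Nr P) = Module.finrank (RatFunc F) (Nr L) := by
  obtain ⟨E, G, hE, hG, hEG⟩ := hGL
  have h1 : Module.finrank (RatFunc F) (Nr P)
      = Module.finrank (RatFunc F) (Nr (glinTarget (k := k) P)) := by
    rw [← jmap_map_Nr hk hmn]
    exact (Submodule.equivMapOfInjective _ (jmap_injective k n hk) (Nr P)).finrank_eq
  have hdetE : IsUnit (matRF E).det := by
    have h := hE.map (algebraMap F[X] (RatFunc F))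
    rwa [RingHom.map_det] at h
  have hdetG : IsUnit (matRF G).det := by
    have h := hG.map (algebraMap F[X] (RatFunc F))
    rwa [RingHom.map_det] at h
  have hmulEq : matRF E * matRF L * matRF G = matRF (glinTarget P) := by
    simp only [matRF, ← Matrix.map_mul]
    rw [hEG]
  let eG : (Fin k × Fin n → RatFunc F) ≃ₗ[RatFunc F] (Fin k × Fin n → RatFunc F) :=
    LinearEquiv.ofLinear (Matrix.mulVecLin (matRF G)) (Matrix.mulVecLin (matRF G)⁻¹)
      (by rw [← Matrix.mulVecLin_mul, Matrix.mul_nonsing_inv _ hdetG, Matrix.mulVecLin_one])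
      (by rw [← Matrix.mulVecLin_mul, Matrix.nonsing_inv_mul _ hdetG, Matrix.mulVecLin_one])
  have hcomap : Nr (glinTarget (k := k) P)
      = Submodule.comap (eG : (Fin k × Fin n → RatFunc F) →ₗ[RatFunc F] _) (Nr L) := by
    ext y
    rw [Submodule.mem_comap, mem_Nr_iff, mem_Nr_iff]
    have heGy : (eG : (Fin k × Fin n → RatFunc F) →ₗ[RatFunc F] _) y
        = (matRF G).mulVec y := rfl
    rw [heGy]
    have hT : (matRF (glinTarget (k := k) P)).mulVec y
        = (matRF E).mulVec ((matRF L).mulVec ((matRF G).mulVec y)) := by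
      rw [← hmulEq, ← Matrix.mulVec_mulVec, ← Matrix.mulVec_mulVec]
    rw [hT]
    constructor
    · intro h
      exact mulVec_eq_zero_of_isUnit_det (matRF E) hdetE h
    · intro h
      rw [h, Matrix.mulVec_zero]
  have h2 : Module.finrank (RatFunc F) (Nr (glinTarget (k := k) P))
      = Module.finrank (RatFunc F) (Nr L) := by
    rw [hcomap, Submodule.comap_equiv_eq_map_symm]
    exact LinearEquiv.finrank_map_eq _ _
  rw [h1, h2]

end Stmt6Helpers
/-- For `m ≥ n` and `L ∈ 𝕃₁(P)` with nonzero right ansatz vector `v`: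
`Λ_k(λ) ⊗ x(λ) ∈ N_r(L)` iff `x(λ) ∈ N_r(P)`; moreover if `L` is a g-linearization of `P`
then `x ↦ Λ_k(λ) ⊗ x` is an `F(λ)`-linear isomorphism `N_r(P) ≃ N_r(L)`, and
`x ∈ N_r(P)` is a vector polynomial iff `Λ_k(λ) ⊗ x` is a vector polynomial. -/
theorem statement_6 {F : Type*} [RCLike F] {k m n : ℕ} (hk : 0 < k) (hmn : n ≤ m)
    (A : Fin (k + 1) → Matrix (Fin m) (Fin n) F)
    (Xc Yc : Matrix (Fin k × Fin m) (Fin k × Fin n) F)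
    (v : Fin k → F) (hv : v ≠ 0)
    (hL : RightAnsatz (matPoly A) (pencil Xc Yc) v) :
    (∀ x : Fin n → RatFunc F,
      lamTensor k x ∈ Nr (pencil Xc Yc) ↔ x ∈ Nr (matPoly A)) ∧
    (IsGLin (matPoly A) (pencil Xc Yc) →
      (∃ e : Nr (matPoly A) ≃ₗ[RatFunc F] Nr (pencil Xc Yc),
        ∀ x : Nr (matPoly A),
          (e x : Fin k × Fin n → RatFunc F) = lamTensor k (x : Fin n → RatFunc F)) ∧
      (∀ x : Fin n → RatFunc F, x ∈ Nr (matPoly A) →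
        (IsVecPoly x ↔ IsVecPoly (lamTensor k x)))) := by
  refine ⟨fun x => key_iff hk A Xc Yc v hv hL x, fun hGL => ⟨?_, ?_⟩⟩
  · have hmem : ∀ x ∈ Nr (matPoly A),
        (Matrix.mulVecLin (matRF (Lam F k n))) x ∈ Nr (pencil Xc Yc) := by
      intro x hx
      have h := (key_iff hk A Xc Yc v hv hL x).mpr hx
      rwa [lamTensor_eq_mulVec] at h
    set f := (Matrix.mulVecLin (matRF (Lam F k n))).restrict hmem with hf
    have hfinj : Function.Injective f := by
      intro a b hab
      apply Subtype.ext
      apply lamTensor_injective hk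
      rw [lamTensor_eq_mulVec, lamTensor_eq_mulVec]
      exact congrArg Subtype.val hab
    refine ⟨f.linearEquivOfInjective hfinj
      (finrank_Nr_eq_of_glin hk hmn (matPoly A) (pencil Xc Yc) hGL), ?_⟩
    intro x
    rw [LinearMap.linearEquivOfInjective_apply]
    simp only [hf, LinearMap.restrict_apply]
    rw [lamTensor_eq_mulVec]
    rfl
  · intro x hx
    constructor
    · rintro ⟨p, rfl⟩
      refine ⟨fun q => Polynomial.X ^ (k - 1 - (q.1 : ℕ)) * p q.2, ?_⟩
      funext q
      simp [lamTensor, polyVec, _root_.map_mul]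
    · rintro ⟨p, hp⟩
      refine ⟨fun c => p (⟨k - 1, by omega⟩, c), ?_⟩
      funext c
      have h2 := congrFun hp (⟨k - 1, by omega⟩, c)
      simpa [lamTensor, polyVec, Nat.sub_self] using h2
end GLin
end
end
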